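/- Let N ∈ ℕ, a < 1, and let A, m, λ₁ ∈ ℝ. Let φ : ℝ^N → ℝ be a C² function with Δφ = −λ₁·φ on ℝ^N, where Δφ(y) = Σ_{i=1}^N ∂²φ/∂y_i²(y). Define ω(x,y) = x^{1−a}·e^{Ax}·φ(y) for x > 0, y ∈ ℝ^N. Then for all x > 0 and y ∈ ℝ^N: ∂/∂x( x^{a}·∂ω/∂x )(x,y) + x^{a}·Δ_yω(x,y) − m²·x^{a}·ω(x,y) = e^{Ax}·φ(y)·( A(2−a) + x(A² − m² − λ₁) ). In particular, if φ ≥ 0, A ≥ 0 and A² ≥ m² + λ₁, then div(x^{a}∇ω) − m²x^{a}ω ≥ 0 for all x > 0. -/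

import Mathlib

open Filter Set Real

/-- The Laplacian of `φ : ℝ^N → ℝ` at `y`, as the sum of the second derivatives
of the coordinate slices `s ↦ φ(update y i s)` at `y i`. -/
noncomputable def lap (N : ℕ) (φ : (Fin N → ℝ) → ℝ) (y : Fin N → ℝ) : ℝ :=
  ∑ i : Fin N, deriv (deriv (fun s : ℝ => φ (Function.update y i s))) (y i)

lemma lap_const_mul (N : ℕ) (c : ℝ) (φ : (Fin N → ℝ) → ℝ) (y : Fin N → ℝ) :
    lap N (fun y' => c * φ y') y = c * lap N φ y := by
  unfold lap
  rw [Finset.mul_sum]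
  refine Finset.sum_congr rfl fun i _ => ?_
  rw [deriv_const_mul_field' c, deriv_const_mul_field' c]

lemma inner_deriv (a A c : ℝ) {t : ℝ} (ht : 0 < t) :
    HasDerivAt (fun x'' : ℝ => x'' ^ (1 - a) * Real.exp (A * x'') * c)
      (((1 - a) * t ^ (-a) * Real.exp (A * t) + t ^ (1 - a) * (Real.exp (A * t) * A)) * c)
      t := by
  have h1 : HasDerivAt (fun s : ℝ => s ^ (1 - a)) ((1 - a) * t ^ (1 - a - 1)) t :=
    Real.hasDerivAt_rpow_const (Or.inl ht.ne')
  have h2 : HasDerivAt (fun s : ℝ => Real.exp (A * s)) (Real.exp (A * t) * A) t := by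
    simpa [Function.comp_def] using (Real.hasDerivAt_exp (A * t)).comp t ((hasDerivAt_id t).const_mul A)
  have := (h1.mul h2).mul_const c
  rw [show (1 - a - 1 : ℝ) = -a by ring] at this
  exact this

theorem stmt15 (N : ℕ) (a A m l₁ : ℝ) (ha : a < 1)
    (φ : (Fin N → ℝ) → ℝ) (hφ : ContDiff ℝ 2 φ)
    (hlap : ∀ y, lap N φ y = -l₁ * φ y) :
    (∀ x : ℝ, 0 < x → ∀ y : Fin N → ℝ,
      deriv (fun x' : ℝ =>
          x' ^ a * deriv (fun x'' : ℝ => x'' ^ (1 - a) * Real.exp (A * x'') * φ y) x') x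
        + x ^ a * lap N (fun y' => x ^ (1 - a) * Real.exp (A * x) * φ y') y
        - m ^ 2 * x ^ a * (x ^ (1 - a) * Real.exp (A * x) * φ y)
      = Real.exp (A * x) * φ y * (A * (2 - a) + x * (A ^ 2 - m ^ 2 - l₁))) ∧
    ((∀ y, 0 ≤ φ y) → 0 ≤ A → m ^ 2 + l₁ ≤ A ^ 2 →
      ∀ x : ℝ, 0 < x → ∀ y : Fin N → ℝ,
        0 ≤ deriv (fun x' : ℝ =>
            x' ^ a * deriv (fun x'' : ℝ => x'' ^ (1 - a) * Real.exp (A * x'') * φ y) x') x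
          + x ^ a * lap N (fun y' => x ^ (1 - a) * Real.exp (A * x) * φ y') y
          - m ^ 2 * x ^ a * (x ^ (1 - a) * Real.exp (A * x) * φ y)) := by
  have main : ∀ x : ℝ, 0 < x → ∀ y : Fin N → ℝ,
      deriv (fun x' : ℝ =>
          x' ^ a * deriv (fun x'' : ℝ => x'' ^ (1 - a) * Real.exp (A * x'') * φ y) x') x
        + x ^ a * lap N (fun y' => x ^ (1 - a) * Real.exp (A * x) * φ y') y
        - m ^ 2 * x ^ a * (x ^ (1 - a) * Real.exp (A * x) * φ y)
      = Real.exp (A * x) * φ y * (A * (2 - a) + x * (A ^ 2 - m ^ 2 - l₁)) := by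
    intro x hx y
    set c := φ y with hc
    -- eventual equality of the flux with a smooth function h
    have hev : (fun x' : ℝ =>
        x' ^ a * deriv (fun x'' : ℝ => x'' ^ (1 - a) * Real.exp (A * x'') * c) x')
        =ᶠ[nhds x] fun x' : ℝ => ((1 - a) + A * x') * Real.exp (A * x') * c := by
      filter_upwards [Ioi_mem_nhds hx] with t ht
      have ht' : (0 : ℝ) < t := ht
      rw [(inner_deriv a A c ht').deriv]
      have e1 : t ^ a * t ^ (-a) = 1 := by
        rw [← Real.rpow_add ht']; simp
      have e2 : t ^ a * t ^ (1 - a) = t := by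
        rw [← Real.rpow_add ht', show a + (1 - a) = (1 : ℝ) by ring, Real.rpow_one]
      linear_combination ((1 - a) * Real.exp (A * t) * c) * e1 + (A * Real.exp (A * t) * c) * e2
    have hderiv_h : HasDerivAt (fun x' : ℝ => ((1 - a) + A * x') * Real.exp (A * x') * c)
        ((A * (2 - a) + A ^ 2 * x) * Real.exp (A * x) * c) x := by
      have h1 : HasDerivAt (fun t : ℝ => (1 - a) + A * t) A x := by
        simpa using ((hasDerivAt_id x).const_mul A).const_add (1 - a)
      have h2 : HasDerivAt (fun s : ℝ => Real.exp (A * s)) (Real.exp (A * x) * A) x := by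
        simpa [Function.comp_def] using (Real.hasDerivAt_exp (A * x)).comp x ((hasDerivAt_id x).const_mul A)
      have := (h1.mul h2).mul_const c
      refine this.congr_deriv ?_
      ring
    have hd : deriv (fun x' : ℝ =>
        x' ^ a * deriv (fun x'' : ℝ => x'' ^ (1 - a) * Real.exp (A * x'') * c) x') x
        = (A * (2 - a) + A ^ 2 * x) * Real.exp (A * x) * c := by
      rw [hev.deriv_eq, hderiv_h.deriv]
    have hlap' : lap N (fun y' => x ^ (1 - a) * Real.exp (A * x) * φ y') y
        = x ^ (1 - a) * Real.exp (A * x) * (-l₁ * c) := by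
      have := lap_const_mul N (x ^ (1 - a) * Real.exp (A * x)) φ y
      simpa [mul_assoc, hlap y, hc] using this
    have e2 : x ^ a * x ^ (1 - a) = x := by
      rw [← Real.rpow_add hx, show a + (1 - a) = (1 : ℝ) by ring, Real.rpow_one]
    rw [hd, hlap']
    linear_combination ((-l₁ - m ^ 2) * Real.exp (A * x) * c) * e2
  refine ⟨main, fun hφ0 hA hA2 x hx y => ?_⟩
  rw [main x hx y]
  have h1 : 0 ≤ A * (2 - a) := mul_nonneg hA (by linarith)
  have h2 : 0 ≤ x * (A ^ 2 - m ^ 2 - l₁) := mul_nonneg hx.le (by linarith)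
  exact mul_nonneg (mul_nonneg (Real.exp_pos _).le (hφ0 y)) (by linarith)
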